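/- Let 𝒮 be an irredundant covering family of subsets of finite set J, and let G^c_𝒮 = (J, Ē) be the conflict graph whose edges are the infeasible pairs. Then 𝒮 is pairwise IB-representable (every minimal infeasible set has cardinality 2) if and only if the members of 𝒮 are exactly the maximal independent sets of G^c_𝒮. -/

import Mathlib

open Finset

def Feasible {α : Type*} (𝒮 : Finset (Finset α)) (T : Finset α) : Prop :=
  ∃ S ∈ 𝒮, T ⊆ S

def MinInfeasible {α : Type*} (J : Finset α) (𝒮 : Finset (Finset α)) (E : Finset α) : Prop :=
  E ⊆ J ∧ ¬ Feasible 𝒮 E ∧ ∀ E' ⊂ E, Feasible 𝒮 E'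

def ConflictEdge {α : Type*} [DecidableEq α] (J : Finset α) (𝒮 : Finset (Finset α))
    (u v : α) : Prop :=
  u ∈ J ∧ v ∈ J ∧ u ≠ v ∧ ¬ Feasible 𝒮 ({u, v} : Finset α)

/-- `U` is an independent set of the conflict graph. -/
def GraphIndep {α : Type*} [DecidableEq α] (J : Finset α) (𝒮 : Finset (Finset α))
    (U : Finset α) : Prop :=
  U ⊆ J ∧ ∀ u ∈ U, ∀ v ∈ U, ¬ ConflictEdge J 𝒮 u v

/-- Every member of 𝒮 is independent in the conflict graph. -/
lemma mem_indep {α : Type*} [DecidableEq α] (J : Finset α) (𝒮 : Finset (Finset α))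
    (hsubJ : ∀ S ∈ 𝒮, S ⊆ J) {S : Finset α} (hS : S ∈ 𝒮) : GraphIndep J 𝒮 S := by
  refine ⟨hsubJ S hS, fun u hu v hv hc => ?_⟩
  exact hc.2.2.2 ⟨S, hS, by
    intro x hx
    simp only [Finset.mem_insert, Finset.mem_singleton] at hx
    rcases hx with rfl | rfl <;> assumption⟩

/-- `CDC(𝒮)` is pairwise IB-representable iff the members of `𝒮` are exactly the maximal
independent sets of the conflict graph. -/
theorem stmt8 {α : Type*} [DecidableEq α] (J : Finset α) (𝒮 : Finset (Finset α))
    (hcover : ∀ v ∈ J, ∃ S ∈ 𝒮, v ∈ S)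
    (hsubJ : ∀ S ∈ 𝒮, S ⊆ J)
    (hirr : ∀ S ∈ 𝒮, ∀ T ∈ 𝒮, S ⊆ T → S = T) :
    (∀ E : Finset α, MinInfeasible J 𝒮 E → E.card = 2) ↔
    (∀ S : Finset α, S ∈ 𝒮 ↔
      (GraphIndep J 𝒮 S ∧ ∀ U : Finset α, S ⊂ U → ¬ GraphIndep J 𝒮 U)) := by
  classical
  constructor
  · intro hmin
    -- every independent set is feasible
    have key : ∀ U : Finset α, GraphIndep J 𝒮 U → Feasible 𝒮 U := by
      intro U hU
      by_contra hinf
      obtain ⟨E, hE, hEmin⟩ : ∃ m ∈ U.powerset.filter (fun T => ¬ Feasible 𝒮 T),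
          ∀ x ∈ U.powerset.filter (fun T => ¬ Feasible 𝒮 T), ¬ x < m :=
        (Finset.exists_minimal (s := U.powerset.filter (fun T => ¬ Feasible 𝒮 T))
          ⟨U, by simp [hinf]⟩).imp fun m hm =>
          ⟨hm.1, fun x hx hlt => lt_irrefl _ (lt_of_lt_of_le hlt (hm.2 hx hlt.le))⟩
      simp only [Finset.mem_filter, Finset.mem_powerset] at hE
      have hMI : MinInfeasible J 𝒮 E := by
        refine ⟨hE.1.trans hU.1, hE.2, ?_⟩
        intro E' hE'
        by_contra hE'f
        exact hEmin E' (by simp [Finset.mem_filter, Finset.mem_powerset,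
          hE'.subset.trans hE.1, hE'f]) (Finset.lt_iff_ssubset.mpr hE')
      obtain ⟨u, v, huv, hEuv⟩ := Finset.card_eq_two.mp (hmin E hMI)
      have hu : u ∈ U := hE.1 (by simp [hEuv])
      have hv : v ∈ U := hE.1 (by simp [hEuv])
      exact hU.2 u hu v hv ⟨hU.1 hu, hU.1 hv, huv, hEuv ▸ hE.2⟩
    intro S
    constructor
    · intro hS
      refine ⟨mem_indep J 𝒮 hsubJ hS, fun U hSU hU => ?_⟩
      obtain ⟨T, hT, hUT⟩ := key U hU
      have hST : S = T := hirr S hS T hT (hSU.subset.trans hUT)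
      subst hST
      exact (Finset.ssubset_def.mp hSU).2 hUT
    · rintro ⟨hind, hmaxS⟩
      obtain ⟨T, hT, hST⟩ := key S hind
      rcases hST.ssubset_or_eq with hlt | heq
      · exact absurd (mem_indep J 𝒮 hsubJ hT) (hmaxS T hlt)
      · exact heq ▸ hT
  · intro hmax E hE
    obtain ⟨hEJ, hEinf, hEfeas⟩ := hE
    -- every independent set extends to a maximal one, hence is feasible
    have ext : ∀ U : Finset α, GraphIndep J 𝒮 U → Feasible 𝒮 U := by
      intro U hU
      obtain ⟨M, hM, hMmax⟩ : ∃ m ∈ J.powerset.filter (fun T => GraphIndep J 𝒮 T ∧ U ⊆ T),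
          ∀ x ∈ J.powerset.filter (fun T => GraphIndep J 𝒮 T ∧ U ⊆ T), ¬ m < x :=
        (Finset.exists_maximal (s := J.powerset.filter (fun T => GraphIndep J 𝒮 T ∧ U ⊆ T))
        ⟨U, by simp [Finset.mem_filter, Finset.mem_powerset, hU, hU.1]⟩).imp fun m hm =>
          ⟨hm.1, fun x hx hlt => lt_irrefl _ (lt_of_lt_of_le hlt (hm.2 hx hlt.le))⟩
      simp only [Finset.mem_filter, Finset.mem_powerset] at hM
      have hMS : M ∈ 𝒮 := (hmax M).mpr ⟨hM.2.1, fun V hMV hV =>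
        hMmax V (by simp [Finset.mem_filter, Finset.mem_powerset, hV.1, hV,
          hM.2.2.trans hMV.subset]) (Finset.lt_iff_ssubset.mpr hMV)⟩
      exact ⟨M, hMS, hM.2.2⟩
    have h2le : 2 ≤ E.card := by
      by_contra h
      push_neg at h
      interval_cases hc : E.card
      · -- E = ∅, so 𝒮 = ∅, but then ∅ is a maximal independent set in 𝒮
        have hE0 : E = ∅ := Finset.card_eq_zero.mp hc
        subst hE0
        have hSemp : 𝒮 = ∅ := by
          by_contra hne
          obtain ⟨S, hS⟩ := Finset.nonempty_iff_ne_empty.mpr hne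
          exact hEinf ⟨S, hS, Finset.empty_subset S⟩
        obtain ⟨M, hM, _⟩ := ext ∅ ⟨Finset.empty_subset J, by simp⟩
        simp [hSemp] at hM
      · obtain ⟨v, hv⟩ := Finset.card_eq_one.mp hc
        obtain ⟨S, hS, hvS⟩ := hcover v (hEJ (hv ▸ Finset.mem_singleton_self v))
        exact hEinf ⟨S, hS, by simp [hv, hvS]⟩
    have hle2 : E.card ≤ 2 := by
      by_contra h
      push_neg at h
      -- all pairs in E are proper subsets, hence feasible, so E is independent
      have hind : GraphIndep J 𝒮 E := by
        refine ⟨hEJ, fun u hu v hv hc => ?_⟩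
        have hpair : ({u, v} : Finset α) ⊂ E := by
          refine Finset.ssubset_iff_subset_ne.mpr ⟨?_, ?_⟩
          · intro x hx
            simp only [Finset.mem_insert, Finset.mem_singleton] at hx
            rcases hx with rfl | rfl <;> assumption
          · intro heq
            rw [← heq, Finset.card_pair hc.2.2.1] at h
            exact lt_irrefl _ h
        exact hc.2.2.2 (hEfeas _ hpair)
      exact hEinf (ext E hind)
    omega
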